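/- Let x₁, …, x_M be M i.i.d. random points sampled from the uniform (equi-)distribution in the unit ball 𝔹ₙ ⊂ ℝⁿ, let 0 < r < 1, and set ρ = √(1 − r²). Then P( ‖xⱼ‖ > r for all j and (xᵢ, xⱼ/‖xⱼ‖) < r for all i ≠ j ) ≥ 1 − M rⁿ − 0.5 M (M − 1) ρⁿ. -/

import Mathlib

open MeasureTheory ProbabilityTheory RealInnerProductSpace

variable {n : ℕ}

noncomputable def unifBall (n : ℕ) : Measure (EuclideanSpace ℝ (Fin n)) :=
  (volume (Metric.closedBall (0 : EuclideanSpace ℝ (Fin n)) 1))⁻¹ •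
    volume.restrict (Metric.closedBall (0 : EuclideanSpace ℝ (Fin n)) 1)

lemma volB_pos (n : ℕ) : 0 < volume (Metric.closedBall (0 : EuclideanSpace ℝ (Fin n)) 1) :=
  Metric.measure_closedBall_pos volume 0 one_pos

lemma volB_ne_top (n : ℕ) : volume (Metric.closedBall (0 : EuclideanSpace ℝ (Fin n)) 1) ≠ ⊤ :=
  measure_closedBall_lt_top.ne

instance unifBall_prob (n : ℕ) : IsProbabilityMeasure (unifBall n) := by
  constructor
  rw [unifBall, Measure.smul_apply, Measure.restrict_apply MeasurableSet.univ, Set.univ_inter,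
    smul_eq_mul, ENNReal.inv_mul_cancel (volB_pos n).ne' (volB_ne_top n)]

lemma unifBall_norm_le {r : ℝ} (hr0 : 0 ≤ r) (hr1 : r ≤ 1) :
    unifBall n {x | ‖x‖ ≤ r} = ENNReal.ofReal (r ^ n) := by
  have hset : {x : EuclideanSpace ℝ (Fin n) | ‖x‖ ≤ r} = Metric.closedBall 0 r := by
    ext x; simp [mem_closedBall_zero_iff]
  rw [unifBall, Measure.smul_apply, hset,
    Measure.restrict_apply measurableSet_closedBall,
    Set.inter_eq_self_of_subset_left (Metric.closedBall_subset_closedBall hr1),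
    Measure.addHaar_closedBall' volume 0 hr0, finrank_euclideanSpace_fin, smul_eq_mul]
  rw [mul_comm (ENNReal.ofReal _), ← mul_assoc,
    ENNReal.inv_mul_cancel (volB_pos n).ne' (volB_ne_top n), one_mul]

lemma halfball_vol {ρ : ℝ} (hρ0 : 0 ≤ ρ) (u : EuclideanSpace ℝ (Fin n)) (hu : ‖u‖ = 1) :
    volume (Metric.closedBall (0 : EuclideanSpace ℝ (Fin n)) ρ ∩ {x | 0 ≤ ⟪x, u⟫}) =
      ENNReal.ofReal (ρ ^ n) * volume (Metric.closedBall (0 : EuclideanSpace ℝ (Fin n)) 1) / 2 := by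
  set K₀ := Metric.closedBall (0 : EuclideanSpace ℝ (Fin n)) ρ ∩ {x | 0 ≤ ⟪x, u⟫} with hK₀
  set K₁ := Metric.closedBall (0 : EuclideanSpace ℝ (Fin n)) ρ ∩ {x | ⟪x, u⟫ ≤ 0} with hK₁
  have hmhalf : MeasurableSet {x : EuclideanSpace ℝ (Fin n) | 0 ≤ ⟪x, u⟫} :=
    measurableSet_le measurable_const (measurable_id.inner_const)
  have hm₀ : MeasurableSet K₀ := measurableSet_closedBall.inter hmhalf
  have hK₁eq : K₁ = (fun x => -x) ⁻¹' K₀ := by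
    ext x
    simp only [hK₀, hK₁, Set.mem_inter_iff, Set.mem_preimage, Metric.mem_closedBall,
      Set.mem_setOf_eq, dist_zero_right, norm_neg, inner_neg_left, neg_nonneg]
  have hvol01 : volume K₁ = volume K₀ := by
    rw [hK₁eq]
    exact Measure.measure_preimage_neg volume K₀
  have hunion : K₀ ∪ K₁ = Metric.closedBall (0 : EuclideanSpace ℝ (Fin n)) ρ := by
    ext x
    simp only [hK₀, hK₁, Set.mem_union, Set.mem_inter_iff, Set.mem_setOf_eq]
    constructor
    · rintro (⟨h, _⟩ | ⟨h, _⟩) <;> exact h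
    · intro h
      rcases le_total 0 ⟪x, u⟫ with h' | h'
      · exact Or.inl ⟨h, h'⟩
      · exact Or.inr ⟨h, h'⟩
  have hinter : volume (K₀ ∩ K₁) = 0 := by
    have hsub : K₀ ∩ K₁ ⊆ (LinearMap.ker (innerSL ℝ u).toLinearMap : Submodule ℝ _) := by
      rintro x ⟨⟨-, h1⟩, ⟨-, h2⟩⟩
      have : ⟪x, u⟫ = 0 := le_antisymm h2 h1
      simp only [SetLike.mem_coe, LinearMap.mem_ker, ContinuousLinearMap.coe_coe, innerSL_apply_apply]
      rw [real_inner_comm]; exact this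
    refine measure_mono_null hsub ?_
    apply Measure.addHaar_submodule
    intro htop
    have hu0 : ⟪u, u⟫ = (0 : ℝ) := by
      have := htop ▸ Submodule.mem_top (R := ℝ) (M := EuclideanSpace ℝ (Fin n)) (x := u)
      simpa using (htop.symm ▸ Submodule.mem_top :
        u ∈ LinearMap.ker (innerSL ℝ u).toLinearMap)
    rw [real_inner_self_eq_norm_sq, hu] at hu0
    norm_num at hu0
  have hsum : volume K₀ + volume K₁ = volume (Metric.closedBall (0 : EuclideanSpace ℝ (Fin n)) ρ) := by
    have := measure_union_add_inter₀' (μ := volume) hm₀.nullMeasurableSet K₁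
    rw [hunion, hinter, add_zero] at this
    exact this.symm
  rw [hvol01, ← two_mul] at hsum
  rw [Measure.addHaar_closedBall' volume 0 hρ0, finrank_euclideanSpace_fin] at hsum
  rw [← hsum, mul_comm, mul_div_assoc, ENNReal.div_self (by norm_num) (by norm_num), mul_one]

lemma unifBall_cap_le {r ρ : ℝ} (hr : 0 < r) (hr1 : r < 1) (hρ : ρ = Real.sqrt (1 - r ^ 2))
    (u : EuclideanSpace ℝ (Fin n)) (hu : ‖u‖ = 1) :
    unifBall n {x | r ≤ ⟪x, u⟫} ≤ ENNReal.ofReal (ρ ^ n) / 2 := by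
  have hρ0 : 0 ≤ ρ := hρ ▸ Real.sqrt_nonneg _
  have hρ2 : ρ ^ 2 = 1 - r ^ 2 := by
    rw [hρ, Real.sq_sqrt (by nlinarith)]
  have hmC : MeasurableSet {x : EuclideanSpace ℝ (Fin n) | r ≤ ⟪x, u⟫} :=
    measurableSet_le measurable_const measurable_id.inner_const
  have huu : ⟪u, u⟫ = (1 : ℝ) := by
    rw [real_inner_self_eq_norm_sq, hu]; norm_num
  have hsub : {x : EuclideanSpace ℝ (Fin n) | r ≤ ⟪x, u⟫} ∩ Metric.closedBall 0 1 ⊆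
      (fun x => x + -(r • u)) ⁻¹'
        (Metric.closedBall (0 : EuclideanSpace ℝ (Fin n)) ρ ∩ {x | 0 ≤ ⟪x, u⟫}) := by
    rintro x ⟨hx1, hx2⟩
    simp only [Set.mem_setOf_eq] at hx1
    rw [mem_closedBall_zero_iff] at hx2
    have hx2' : ‖x‖ ^ 2 ≤ 1 := by nlinarith [norm_nonneg x]
    constructor
    · show ((fun x => x + -(r • u)) x) ∈ Metric.closedBall (0 : EuclideanSpace ℝ (Fin n)) ρ
      simp only []
      rw [Metric.mem_closedBall, dist_zero_right, ← sub_eq_add_neg]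
      have h1 : ‖x - r • u‖ ^ 2 ≤ ρ ^ 2 := by
        rw [@norm_sub_sq_real , real_inner_smul_right, norm_smul, Real.norm_eq_abs,
          abs_of_nonneg hr.le, hu, mul_one]
        nlinarith
      calc ‖x - r • u‖ = Real.sqrt (‖x - r • u‖ ^ 2) := (Real.sqrt_sq (norm_nonneg _)).symm
        _ ≤ Real.sqrt (ρ ^ 2) := Real.sqrt_le_sqrt h1
        _ = ρ := Real.sqrt_sq hρ0
    · simp only [Set.mem_setOf_eq, inner_add_left, inner_neg_left, real_inner_smul_left, huu,
        mul_one]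
      linarith
  have htrans : volume ((fun x : EuclideanSpace ℝ (Fin n) => x + -(r • u)) ⁻¹'
      (Metric.closedBall (0 : EuclideanSpace ℝ (Fin n)) ρ ∩ {x | 0 ≤ ⟪x, u⟫})) =
      ENNReal.ofReal (ρ ^ n) * volume (Metric.closedBall (0 : EuclideanSpace ℝ (Fin n)) 1) / 2 := by
    rw [measure_preimage_add_right, halfball_vol hρ0 u hu]
  rw [unifBall, Measure.smul_apply, Measure.restrict_apply hmC, smul_eq_mul]
  calc (volume (Metric.closedBall (0 : EuclideanSpace ℝ (Fin n)) 1))⁻¹ *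
      volume ({x : EuclideanSpace ℝ (Fin n) | r ≤ ⟪x, u⟫} ∩ Metric.closedBall 0 1)
      ≤ (volume (Metric.closedBall (0 : EuclideanSpace ℝ (Fin n)) 1))⁻¹ *
        (ENNReal.ofReal (ρ ^ n) * volume (Metric.closedBall (0 : EuclideanSpace ℝ (Fin n)) 1) / 2) := by
        gcongr
        rw [← htrans]
        exact measure_mono hsub
    _ = ENNReal.ofReal (ρ ^ n) / 2 := by
        rw [div_eq_mul_inv, div_eq_mul_inv, mul_comm (ENNReal.ofReal _)
          (volume (Metric.closedBall (0 : EuclideanSpace ℝ (Fin n)) 1)), mul_assoc, ← mul_assoc,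
          ENNReal.inv_mul_cancel (volB_pos n).ne' (volB_ne_top n), one_mul]

lemma unifBall_pair_le {r ρ : ℝ} (hr : 0 < r) (hr1 : r < 1) (hρ : ρ = Real.sqrt (1 - r ^ 2)) :
    ((unifBall n).prod (unifBall n)) {p : EuclideanSpace ℝ (Fin n) × EuclideanSpace ℝ (Fin n) |
      r ≤ ⟪p.2, ‖p.1‖⁻¹ • p.1⟫} ≤ ENNReal.ofReal (ρ ^ n) / 2 := by
  have hmS : MeasurableSet {p : EuclideanSpace ℝ (Fin n) × EuclideanSpace ℝ (Fin n) |
      r ≤ ⟪p.2, ‖p.1‖⁻¹ • p.1⟫} :=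
    measurableSet_le measurable_const
      (measurable_snd.inner ((measurable_fst.norm.inv).smul measurable_fst))
  rw [Measure.prod_apply hmS]
  have hbound : ∀ x : EuclideanSpace ℝ (Fin n),
      unifBall n (Prod.mk x ⁻¹' {p : EuclideanSpace ℝ (Fin n) × EuclideanSpace ℝ (Fin n) |
        r ≤ ⟪p.2, ‖p.1‖⁻¹ • p.1⟫}) ≤ ENNReal.ofReal (ρ ^ n) / 2 := by
    intro x
    have heq : Prod.mk x ⁻¹' {p : EuclideanSpace ℝ (Fin n) × EuclideanSpace ℝ (Fin n) |
        r ≤ ⟪p.2, ‖p.1‖⁻¹ • p.1⟫} = {y | r ≤ ⟪y, ‖x‖⁻¹ • x⟫} := rfl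
    rw [heq]
    rcases eq_or_ne x 0 with rfl | hx
    · have he : {y : EuclideanSpace ℝ (Fin n) |
          r ≤ ⟪y, ‖(0 : EuclideanSpace ℝ (Fin n))‖⁻¹ • (0 : EuclideanSpace ℝ (Fin n))⟫} = ∅ := by
        ext y
        simp [hr.not_ge]
      rw [he]
      simp
    · exact unifBall_cap_le hr hr1 hρ _ (norm_smul_inv_norm hx)
  calc ∫⁻ x, unifBall n (Prod.mk x ⁻¹' {p : EuclideanSpace ℝ (Fin n) × EuclideanSpace ℝ (Fin n) |
        r ≤ ⟪p.2, ‖p.1‖⁻¹ • p.1⟫}) ∂(unifBall n)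
      ≤ ∫⁻ _, ENNReal.ofReal (ρ ^ n) / 2 ∂(unifBall n) := lintegral_mono hbound
    _ = ENNReal.ofReal (ρ ^ n) / 2 := by simp

/-- Theorem 2, inequality (8): for `M` i.i.d. points uniform in the unit ball,
with probability at least `1 - M rⁿ - 0.5 M (M-1) ρⁿ` (where `ρ = √(1-r²)`)
every point has norm `> r` and `⟪xᵢ, xⱼ/‖xⱼ‖⟫ < r` for all `i ≠ j`. -/
theorem stochastic_separation_all_points_ball
    (n M : ℕ) (hn : 0 < n) (hM : 0 < M)
    (r ρ : ℝ) (hr : 0 < r) (hr1 : r < 1) (hρ : ρ = Real.sqrt (1 - r ^ 2))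
    (Ω : Type*) [MeasurableSpace Ω] (P : Measure Ω) [IsProbabilityMeasure P]
    (X : Fin M → Ω → EuclideanSpace ℝ (Fin n))
    (hmeas : ∀ i, Measurable (X i))
    (hindep : iIndepFun X P)
    (hdist : ∀ i, Measure.map (X i) P =
      (volume (Metric.closedBall (0 : EuclideanSpace ℝ (Fin n)) 1))⁻¹ •
        volume.restrict (Metric.closedBall (0 : EuclideanSpace ℝ (Fin n)) 1)) :
    (P {ω | (∀ j : Fin M, ‖X j ω‖ > r) ∧
        ∀ i j : Fin M, i ≠ j → ⟪X i ω, ‖X j ω‖⁻¹ • X j ω⟫ < r}).toReal ≥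
      1 - (M : ℝ) * r ^ n - 0.5 * (M : ℝ) * ((M : ℝ) - 1) * ρ ^ n := by
  classical
  have hρ0 : 0 ≤ ρ := hρ ▸ Real.sqrt_nonneg _
  have hdist' : ∀ i, Measure.map (X i) P = unifBall n := hdist
  set G := {ω | (∀ j : Fin M, ‖X j ω‖ > r) ∧
      ∀ i j : Fin M, i ≠ j → ⟪X i ω, ‖X j ω‖⁻¹ • X j ω⟫ < r} with hGdef
  have hXu : ∀ j, Measurable fun ω => ‖X j ω‖⁻¹ • X j ω :=
    fun j => ((hmeas j).norm.inv).smul (hmeas j)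
  have hA : ∀ j, MeasurableSet {ω | ‖X j ω‖ ≤ r} :=
    fun j => measurableSet_le (hmeas j).norm measurable_const
  have hD : ∀ i j, MeasurableSet {ω | r ≤ ⟪X i ω, ‖X j ω‖⁻¹ • X j ω⟫} :=
    fun i j => measurableSet_le measurable_const ((hmeas i).inner (hXu j))
  have hmG : MeasurableSet G := by
    have hGeq : G = (⋂ j, {ω | ‖X j ω‖ ≤ r}ᶜ) ∩
        ⋂ i, ⋂ j, ⋂ _ : i ≠ j, {ω | r ≤ ⟪X i ω, ‖X j ω‖⁻¹ • X j ω⟫}ᶜ := by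
      ext ω
      simp only [hGdef, Set.mem_setOf_eq, Set.mem_inter_iff, Set.mem_iInter, Set.mem_compl_iff,
        not_le, gt_iff_lt]
    rw [hGeq]
    exact (MeasurableSet.iInter fun j => (hA j).compl).inter
      (MeasurableSet.iInter fun i => MeasurableSet.iInter fun j =>
        MeasurableSet.iInter fun _ => (hD i j).compl)
  have hsub : Gᶜ ⊆ (⋃ j, {ω | ‖X j ω‖ ≤ r}) ∪
      ⋃ i, ⋃ j ∈ (Finset.univ.erase i : Finset (Fin M)),
        {ω | r ≤ ⟪X i ω, ‖X j ω‖⁻¹ • X j ω⟫} := by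
    intro ω hω
    rw [Set.mem_compl_iff, hGdef, Set.mem_setOf_eq] at hω
    push_neg at hω
    by_cases hcase : ∃ j, ‖X j ω‖ ≤ r
    · obtain ⟨j, hj⟩ := hcase
      exact Or.inl (Set.mem_iUnion.2 ⟨j, hj⟩)
    · push_neg at hcase
      obtain ⟨i, j, hij, hle⟩ := hω fun j => lt_of_not_ge (by simpa using hcase j)
      refine Or.inr (Set.mem_iUnion.2 ⟨i, Set.mem_iUnion₂.2 ⟨j, ?_, hle⟩⟩)
      exact Finset.mem_erase.mpr ⟨hij.symm, Finset.mem_univ j⟩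
  have hPA : ∀ j, P {ω | ‖X j ω‖ ≤ r} = ENNReal.ofReal (r ^ n) := by
    intro j
    have heq : {ω | ‖X j ω‖ ≤ r} = X j ⁻¹' {x | ‖x‖ ≤ r} := rfl
    rw [heq, ← Measure.map_apply (hmeas j)
      (measurableSet_le measurable_norm measurable_const), hdist' j]
    exact unifBall_norm_le hr.le hr1.le
  have hPD : ∀ i j : Fin M, i ≠ j →
      P {ω | r ≤ ⟪X i ω, ‖X j ω‖⁻¹ • X j ω⟫} ≤ ENNReal.ofReal (ρ ^ n) / 2 := by
    intro i j hij
    have hT : Measurable fun ω => (X j ω, X i ω) := (hmeas j).prodMk (hmeas i)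
    have hmS : MeasurableSet {p : EuclideanSpace ℝ (Fin n) × EuclideanSpace ℝ (Fin n) |
        r ≤ ⟪p.2, ‖p.1‖⁻¹ • p.1⟫} :=
      measurableSet_le measurable_const
        (measurable_snd.inner ((measurable_fst.norm.inv).smul measurable_fst))
    have hmap : P.map (fun ω => (X j ω, X i ω)) = (unifBall n).prod (unifBall n) := by
      rw [(indepFun_iff_map_prod_eq_prod_map_map (hmeas j).aemeasurable
        (hmeas i).aemeasurable).mp (hindep.indepFun hij.symm), hdist' j, hdist' i]
    have heq : {ω | r ≤ ⟪X i ω, ‖X j ω‖⁻¹ • X j ω⟫} =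
        (fun ω => (X j ω, X i ω)) ⁻¹' {p : EuclideanSpace ℝ (Fin n) × EuclideanSpace ℝ (Fin n) |
          r ≤ ⟪p.2, ‖p.1‖⁻¹ • p.1⟫} := rfl
    rw [heq, ← Measure.map_apply hT hmS, hmap]
    exact unifBall_pair_le hr hr1 hρ
  have hM1 : ((M - 1 : ℕ) : ℝ) = (M : ℝ) - 1 := by
    rw [Nat.cast_pred hM]
  have hMR : (1 : ℝ) ≤ (M : ℝ) := by exact_mod_cast hM
  have hb1 : (0 : ℝ) ≤ (M : ℝ) * r ^ n := by positivity
  have hb2 : (0 : ℝ) ≤ 0.5 * (M : ℝ) * ((M : ℝ) - 1) * ρ ^ n := by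
    have h1 : (0 : ℝ) ≤ 0.5 * (M : ℝ) * ((M : ℝ) - 1) := by nlinarith
    exact mul_nonneg h1 (pow_nonneg hρ0 n)
  have hcompl : P Gᶜ ≤
      ENNReal.ofReal ((M : ℝ) * r ^ n + 0.5 * (M : ℝ) * ((M : ℝ) - 1) * ρ ^ n) := by
    calc P Gᶜ ≤ P ((⋃ j, {ω | ‖X j ω‖ ≤ r}) ∪
        ⋃ i, ⋃ j ∈ (Finset.univ.erase i : Finset (Fin M)),
          {ω | r ≤ ⟪X i ω, ‖X j ω‖⁻¹ • X j ω⟫}) := measure_mono hsub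
      _ ≤ P (⋃ j, {ω | ‖X j ω‖ ≤ r}) +
          P (⋃ i, ⋃ j ∈ (Finset.univ.erase i : Finset (Fin M)),
            {ω | r ≤ ⟪X i ω, ‖X j ω‖⁻¹ • X j ω⟫}) := measure_union_le _ _
      _ ≤ (∑ j : Fin M, P {ω | ‖X j ω‖ ≤ r}) +
          ∑ i : Fin M, P (⋃ j ∈ (Finset.univ.erase i : Finset (Fin M)),
            {ω | r ≤ ⟪X i ω, ‖X j ω‖⁻¹ • X j ω⟫}) := by
        gcongr
        · exact measure_iUnion_fintype_le _ _
        · exact measure_iUnion_fintype_le _ _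
      _ ≤ (∑ _j : Fin M, ENNReal.ofReal (r ^ n)) +
          ∑ _i : Fin M, (M - 1) • (ENNReal.ofReal (ρ ^ n) / 2) := by
        gcongr with j _ i
        · exact (hPA j).le
        · calc P (⋃ j ∈ (Finset.univ.erase i : Finset (Fin M)),
              {ω | r ≤ ⟪X i ω, ‖X j ω‖⁻¹ • X j ω⟫})
              ≤ ∑ j ∈ (Finset.univ.erase i : Finset (Fin M)),
                P {ω | r ≤ ⟪X i ω, ‖X j ω‖⁻¹ • X j ω⟫} := measure_biUnion_finset_le _ _
            _ ≤ ∑ _j ∈ (Finset.univ.erase i : Finset (Fin M)),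
                (ENNReal.ofReal (ρ ^ n) / 2) := by
                refine Finset.sum_le_sum fun j hj => ?_
                exact hPD i j (Ne.symm (Finset.mem_erase.mp hj).1)
            _ = (M - 1) • (ENNReal.ofReal (ρ ^ n) / 2) := by
                rw [Finset.sum_const, Finset.card_erase_of_mem (Finset.mem_univ i),
                  Finset.card_univ, Fintype.card_fin]
      _ = ENNReal.ofReal ((M : ℝ) * r ^ n + 0.5 * (M : ℝ) * ((M : ℝ) - 1) * ρ ^ n) := by
        rw [Finset.sum_const, Finset.sum_const, Finset.card_univ, Fintype.card_fin]
        rw [nsmul_eq_mul, nsmul_eq_mul, nsmul_eq_mul]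
        rw [ENNReal.ofReal_add hb1 hb2]
        have hhalf : ENNReal.ofReal (ρ ^ n) / 2 = ENNReal.ofReal (ρ ^ n / 2) := by
          rw [ENNReal.ofReal_div_of_pos (by norm_num : (0 : ℝ) < 2)]
          norm_num
        congr 1
        · rw [← ENNReal.ofReal_natCast M, ← ENNReal.ofReal_mul (Nat.cast_nonneg M)]
        · rw [hhalf, ← ENNReal.ofReal_natCast M, ← ENNReal.ofReal_natCast (M - 1),
            ← ENNReal.ofReal_mul (Nat.cast_nonneg (M - 1)),
            ← ENNReal.ofReal_mul (Nat.cast_nonneg M)]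
          congr 1
          rw [hM1]
          ring
  have hGc : P Gᶜ ≤ 1 := prob_le_one
  have h1 : P G = 1 - P Gᶜ := by
    have := prob_compl_eq_one_sub (μ := P) hmG.compl
    rwa [compl_compl] at this
  rw [h1, ENNReal.toReal_sub_of_le hGc ENNReal.one_ne_top, ENNReal.toReal_one]
  have h2 : (P Gᶜ).toReal ≤ (M : ℝ) * r ^ n + 0.5 * (M : ℝ) * ((M : ℝ) - 1) * ρ ^ n := by
    have := ENNReal.toReal_mono ENNReal.ofReal_ne_top hcompl
    rwa [ENNReal.toReal_ofReal (by linarith)] at this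
  linarith
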